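/- Let [i..j) be an x-interval of a cyclic suffix array of a multiset of cyclic strings over alphabet {a,b}, which is an ℓ-interval with ℓ < ω, and let k be the position of the minimum in LCP[i+1..j). Then there exists a string y of length ℓ − |x| such that [i..k) is the xya-interval and [k..j) is the xyb-interval. -/

import Mathlib

set_option linter.unusedSectionVars false

namespace SILA

variable {α : Type*} [LinearOrder α]

/-- Lexicographic order on infinite strings. -/
def lexLE (f g : ℕ → α) : Prop :=
  f = g ∨ ∃ k, (∀ m < k, f m = g m) ∧ f k < g k

/-- Length of longest common prefix of two infinite strings, in ℕ∞. -/
noncomputable def lcpInf (f g : ℕ → α) : ℕ∞ :=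
  sSup {m : ℕ∞ | ∀ k : ℕ, (k : ℕ∞) < m → f k = g k}

/-- A (nonempty) cyclic word. -/
structure CyclicWord (α : Type*) where
  word : List α
  ne : word ≠ []

def CyclicWord.len (w : CyclicWord α) : ℕ := w.word.length

lemma CyclicWord.len_pos (w : CyclicWord α) : 0 < w.len :=
  List.length_pos_iff.mpr w.ne

/-- Positions in a multiset (family) of cyclic words. -/
def Pos {s : ℕ} (W : Fin s → CyclicWord α) : Type _ :=
  (i : Fin s) × Fin (W i).len

instance {s : ℕ} (W : Fin s → CyclicWord α) : Fintype (Pos W) := by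
  unfold Pos; infer_instance

/-- The infinite cyclic suffix starting at a position. -/
def suffixAt {s : ℕ} (W : Fin s → CyclicWord α) (p : Pos W) : ℕ → α :=
  fun k => (W p.1).word.get ⟨(p.2.val + k) % (W p.1).len, Nat.mod_lt _ (W p.1).len_pos⟩

/-- `SA` is a cyclic suffix array of `W`: it enumerates all positions in
nondecreasing lexicographic order of their cyclic suffixes. -/
def IsCyclicSA {s n : ℕ} (W : Fin s → CyclicWord α) (SA : Fin n ≃ Pos W) : Prop :=
  ∀ r r' : Fin n, r ≤ r' → lexLE (suffixAt W (SA r)) (suffixAt W (SA r'))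

/-- The LCP array of a cyclic suffix array (meaningful on indices 1..n-1). -/
noncomputable def lcpArr {s n : ℕ} (W : Fin s → CyclicWord α) (SA : Fin n ≃ Pos W)
    (r : ℕ) : ℕ∞ :=
  if h : 0 < r ∧ r < n then
    lcpInf (suffixAt W (SA ⟨r - 1, by omega⟩)) (suffixAt W (SA ⟨r, h.2⟩))
  else 0

/-- The Burrows–Wheeler transform: character cyclically preceding the suffix of rank `r`. -/
def bwt {s n : ℕ} (W : Fin s → CyclicWord α) (SA : Fin n ≃ Pos W) (r : Fin n) : α :=
  (W (SA r).1).word.get ⟨((SA r).2.val + (W (SA r).1).len - 1) % (W (SA r).1).len,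
    Nat.mod_lt _ (W (SA r).1).len_pos⟩

/-- `x` is a (finite) prefix of the infinite string `f`. -/
def IsPrefix (x : List α) (f : ℕ → α) : Prop :=
  ∀ m : Fin x.length, f m.val = x.get m

/-- `[i..j)` is the x-interval: the ranks of exactly those suffixes with prefix `x`. -/
def IsXInterval {s n : ℕ} (W : Fin s → CyclicWord α) (SA : Fin n ≃ Pos W)
    (x : List α) (i j : ℕ) : Prop :=
  i ≤ j ∧ j ≤ n ∧ ∀ r : Fin n, IsPrefix x (suffixAt W (SA r)) ↔ (i ≤ r.val ∧ r.val < j)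

/-- `[i..j)` is an ℓ-interval of the LCP array `L` (of length `n`, indices 1..n-1). -/
def IsLInterval (L : ℕ → ℕ∞) (n : ℕ) (ℓ : ℕ∞) (i j : ℕ) : Prop :=
  i < j ∧ j ≤ n ∧
  (i = 0 ∨ L i < ℓ) ∧
  (∀ r, i < r → r < j → ℓ ≤ L r) ∧
  ((i + 1 = j ∧ ℓ = ⊤) ∨ ∃ r, i < r ∧ r < j ∧ L r = ℓ) ∧
  (j = n ∨ L j < ℓ)


lemma lcpInf_ge_iff (f g : ℕ → α) (ℓ : ℕ) :
    (ℓ : ℕ∞) ≤ lcpInf f g ↔ ∀ m < ℓ, f m = g m := by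
  constructor
  · intro h m hm
    have h2 : (m : ℕ∞) < lcpInf f g :=
      lt_of_lt_of_le (by exact_mod_cast hm) h
    rw [lcpInf, lt_sSup_iff] at h2
    obtain ⟨b, hb, hmb⟩ := h2
    exact hb m hmb
  · intro h
    apply le_sSup
    intro m hm
    exact h m (by exact_mod_cast hm)

lemma lcpInf_eq_imp (f g : ℕ → α) (ℓ : ℕ) (h : lcpInf f g = ℓ) :
    (∀ m < ℓ, f m = g m) ∧ f ℓ ≠ g ℓ := by
  have h1 := (lcpInf_ge_iff f g ℓ).mp h.ge
  refine ⟨h1, fun hne => ?_⟩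
  have h2 : ((ℓ + 1 : ℕ) : ℕ∞) ≤ lcpInf f g := by
    apply le_sSup
    intro m hm
    have hm' : m < ℓ + 1 := by exact_mod_cast hm
    rcases Nat.lt_succ_iff_lt_or_eq.mp hm' with h' | h'
    · exact h1 m h'
    · subst h'; exact hne
  rw [h] at h2
  have : ℓ + 1 ≤ ℓ := by exact_mod_cast h2
  omega

lemma lexLE_le_at {f g : ℕ → α} (h : lexLE f g) (ℓ : ℕ)
    (hagree : ∀ m < ℓ, f m = g m) : f ℓ ≤ g ℓ := by
  rcases h with h | ⟨c, hc, hlt⟩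
  · rw [h]
  · rcases lt_trichotomy c ℓ with h' | h' | h'
    · exact absurd (hagree c h') (ne_of_lt hlt)
    · subst h'; exact le_of_lt hlt
    · rw [hc ℓ h']

/-- (Binary alphabet, `a = false < b = true`.) If the x-interval
`[i..j)` is an ℓ-interval (ℓ < ω) and `k` is a position of the minimum of
`LCP[i+1..j)`, then for some string `y` of length ℓ − |x|, `[i..k)` is the
xya-interval and `[k..j)` is the xyb-interval. -/
theorem xInterval_split_at_rmq {s n : ℕ}
    (W : Fin s → CyclicWord Bool) (SA : Fin n ≃ Pos W) (hSA : IsCyclicSA W SA)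
    (x : List Bool) (i j k : ℕ) (ℓ : ℕ)
    (hx : IsXInterval W SA x i j)
    (hℓ : IsLInterval (lcpArr W SA) n (ℓ : ℕ∞) i j)
    (hik : i < k) (hkj : k < j)
    (hmin : lcpArr W SA k = (ℓ : ℕ∞)) :
    ∃ y : List Bool, y.length = ℓ - x.length ∧
      IsXInterval W SA (x ++ y ++ [false]) i k ∧
      IsXInterval W SA (x ++ y ++ [true]) k j := by
  classical
  have hjn : j ≤ n := hx.2.1
  have hkn : k < n := lt_of_lt_of_le hkj hjn
  have hk0 : 0 < k := by omega
  -- the suffix at rank r, as a total function of r : ℕ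
  set F : ℕ → ℕ → Bool :=
    fun r => if h : r < n then suffixAt W (SA ⟨r, h⟩) else fun _ => false with hFdef
  have hF : ∀ (r : ℕ) (h : r < n), F r = suffixAt W (SA ⟨r, h⟩) := by
    intro r h; simp [hFdef, h]
  have hFfin : ∀ r : Fin n, suffixAt W (SA r) = F r.val := by
    intro r; exact (hF r.val r.isLt).symm
  have hord : ∀ r r' : ℕ, r ≤ r' → r' < n → lexLE (F r) (F r') := by
    intro r r' hle h'
    rw [hF r (lt_of_le_of_lt hle h'), hF r' h']
    exact hSA ⟨r, lt_of_le_of_lt hle h'⟩ ⟨r', h'⟩ hle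
  -- lcp information at rank k
  have hmin' : lcpInf (F (k - 1)) (F k) = (ℓ : ℕ∞) := by
    rw [lcpArr, dif_pos ⟨hk0, hkn⟩] at hmin
    rw [hF (k - 1) (by omega), hF k hkn]
    exact hmin
  -- adjacent agreement inside (i, j)
  have adj : ∀ r, i < r → r < j → ∀ m < ℓ, F (r - 1) m = F r m := by
    intro r hir hrj
    have h1 : 0 < r ∧ r < n := ⟨by omega, by omega⟩
    have h2 := hℓ.2.2.2.1 r hir hrj
    rw [lcpArr, dif_pos h1] at h2
    rw [hF (r - 1) (by omega), hF r h1.2]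
    exact (lcpInf_ge_iff _ _ ℓ).mp h2
  have up : ∀ d, k + d < j → ∀ m < ℓ, F (k + d) m = F k m := by
    intro d
    induction d with
    | zero => intro _ m _; rfl
    | succ d ih =>
      intro hd m hm
      have h1 : F (k + d) m = F (k + (d + 1)) m := by
        have := adj (k + (d + 1)) (by omega) (by omega) m hm
        simpa using this
      rw [← h1, ih (by omega) m hm]
  have down : ∀ d r, r + d = k → i ≤ r → ∀ m < ℓ, F r m = F k m := by
    intro d
    induction d with
    | zero => intro r hr _ m _; rw [show r = k by omega]
    | succ d ih =>
      intro r hr hir m hm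
      have h1 : F r m = F (r + 1) m := by
        have := adj (r + 1) (by omega) (by omega) m hm
        simpa using this
      rw [h1]
      exact ih (r + 1) (by omega) (by omega) m hm
  have agreeK : ∀ r, i ≤ r → r < j → ∀ m < ℓ, F r m = F k m := by
    intro r hir hrj m hm
    rcases le_or_gt k r with h | h
    · obtain ⟨d, rfl⟩ := Nat.exists_eq_add_of_le h
      exact up d (by omega) m hm
    · exact down (k - r) r (by omega) hir m hm
  -- characters at position ℓ
  obtain ⟨hagrk, hnek⟩ := lcpInf_eq_imp _ _ ℓ hmin'
  have hltk : F (k - 1) ℓ < F k ℓ :=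
    lt_of_le_of_ne (lexLE_le_at (hord (k - 1) k (by omega) hkn) ℓ hagrk) hnek
  have hkm1f : F (k - 1) ℓ = false := by
    revert hltk; cases h1 : F (k - 1) ℓ <;> cases h2 : F k ℓ <;> simp
  have hkt : F k ℓ = true := by
    revert hltk; cases h1 : F (k - 1) ℓ <;> cases h2 : F k ℓ <;> simp
  have valFalse : ∀ r, i ≤ r → r < k → F r ℓ = false := by
    intro r hir hrk
    have hagr : ∀ m < ℓ, F r m = F (k - 1) m := fun m hm =>
      (agreeK r hir (by omega) m hm).trans (agreeK (k - 1) (by omega) (by omega) m hm).symm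
    have hle : F r ℓ ≤ F (k - 1) ℓ :=
      lexLE_le_at (hord r (k - 1) (by omega) (by omega)) ℓ hagr
    rw [hkm1f] at hle
    exact le_antisymm hle (Bool.false_le _)
  have valTrue : ∀ r, k ≤ r → r < j → F r ℓ = true := by
    intro r hkr hrj
    have hagr : ∀ m < ℓ, F k m = F r m := fun m hm =>
      (agreeK r (by omega) hrj m hm).symm
    have hle : F k ℓ ≤ F r ℓ :=
      lexLE_le_at (hord k r hkr (by omega)) ℓ hagr
    rw [hkt] at hle
    exact le_antisymm (Bool.le_true _) hle
  -- x is a prefix of suffix at rank k, and |x| ≤ ℓ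
  have hxk : IsPrefix x (F k) := by
    rw [hF k hkn]
    exact (hx.2.2 ⟨k, hkn⟩).mpr ⟨le_of_lt hik, hkj⟩
  have hxk1 : IsPrefix x (F (k - 1)) := by
    rw [hF (k - 1) (by omega)]
    exact (hx.2.2 ⟨k - 1, by omega⟩).mpr ⟨(by omega : i ≤ k - 1), (by omega : k - 1 < j)⟩
  have hxl : x.length ≤ ℓ := by
    have h1 : (x.length : ℕ∞) ≤ lcpInf (F (k - 1)) (F k) := by
      rw [lcpInf_ge_iff]
      intro m hm
      rw [hxk1 ⟨m, hm⟩, hxk ⟨m, hm⟩]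
    rw [hmin'] at h1
    exact_mod_cast h1
  -- construct y
  refine ⟨List.ofFn (fun m : Fin (ℓ - x.length) => F k (x.length + m.val)),
    List.length_ofFn, ?_, ?_⟩ <;>
  · set y : List Bool := List.ofFn (fun m : Fin (ℓ - x.length) => F k (x.length + m.val))
      with hydef
    have hylen : y.length = ℓ - x.length := List.length_ofFn
    have hzlen : (x ++ y).length = ℓ := by
      rw [List.length_append, hylen]; omega
    have hzget : ∀ m (hm : m < ℓ), (x ++ y)[m]'(by omega) = F k m := by
      intro m hm
      by_cases hmx : m < x.length
      · rw [List.getElem_append_left hmx]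
        exact (hxk ⟨m, hmx⟩).symm
      · have hmx' : x.length ≤ m := le_of_not_gt hmx
        rw [List.getElem_append_right hmx']
        simp only [hydef, List.getElem_ofFn]
        congr 1
        omega
    have hchar : ∀ (c : Bool) (r : ℕ) (hr : r < n),
        IsPrefix (x ++ y ++ [c]) (F r) ↔ (∀ m < ℓ, F r m = F k m) ∧ F r ℓ = c := by
      intro c r hr
      have hwlen : (x ++ y ++ [c]).length = ℓ + 1 := by
        rw [List.length_append, hzlen]; rfl
      constructor
      · intro h
        constructor
        · intro m hm
          have h1 := h ⟨m, by omega⟩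
          rw [List.get_eq_getElem] at h1
          rw [h1]
          have h2 : (x ++ y ++ [c])[m]'(by omega) = (x ++ y)[m]'(by omega) :=
            List.getElem_append_left (by omega)
          rw [h2, hzget m hm]
        · have h1 := h ⟨ℓ, by omega⟩
          rw [List.get_eq_getElem] at h1
          rw [h1]
          have h2 : (x ++ y ++ [c])[ℓ]'(by omega) = [c][ℓ - (x ++ y).length]'(by simp [hzlen]) :=
            List.getElem_append_right (by omega)
          rw [h2]
          simp [hzlen]
      · rintro ⟨h1, h2⟩ m
        rw [List.get_eq_getElem]
        have hm : m.val < ℓ + 1 := by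
          have := m.isLt; omega
        rcases Nat.lt_or_ge m.val ℓ with h' | h'
        · have h3 : (x ++ y ++ [c])[m.val]'(by omega) = (x ++ y)[m.val]'(by omega) :=
            List.getElem_append_left (by omega)
          rw [h3, hzget m.val h', ← h1 m.val h']
        · have hm' : m.val = ℓ := by omega
          have h3 : (x ++ y ++ [c])[m.val]'(by omega) = [c][m.val - (x ++ y).length]'(by simp [hzlen, hm']) :=
            List.getElem_append_right (by omega)
          rw [h3]
          simp only [hzlen, hm']
          simpa [hm'] using h2
    first
    | -- xya-interval [i..k)
      refine ⟨le_of_lt hik, le_of_lt hkn, fun r => ?_⟩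
      rw [hFfin r, hchar false r.val r.isLt]
      constructor
      · rintro ⟨hagr, hval⟩
        have hprefx : IsPrefix x (suffixAt W (SA r)) := by
          rw [hFfin r]
          intro m
          have hmx : m.val < ℓ := by
            have := m.isLt; omega
          rw [hagr m.val hmx]
          exact hxk m
        obtain ⟨h1, h2⟩ := (hx.2.2 r).mp hprefx
        refine ⟨h1, ?_⟩
        by_contra h3
        have := valTrue r.val (by omega) h2
        rw [hval] at this
        exact Bool.false_ne_true this
      · rintro ⟨h1, h2⟩
        exact ⟨fun m hm => agreeK r.val h1 (by omega) m hm, valFalse r.val h1 h2⟩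
    | -- xyb-interval [k..j)
      refine ⟨le_of_lt hkj, hjn, fun r => ?_⟩
      rw [hFfin r, hchar true r.val r.isLt]
      constructor
      · rintro ⟨hagr, hval⟩
        have hprefx : IsPrefix x (suffixAt W (SA r)) := by
          rw [hFfin r]
          intro m
          have hmx : m.val < ℓ := by
            have := m.isLt; omega
          rw [hagr m.val hmx]
          exact hxk m
        obtain ⟨h1, h2⟩ := (hx.2.2 r).mp hprefx
        refine ⟨?_, h2⟩
        by_contra h3
        have := valFalse r.val h1 (by omega)
        rw [hval] at this
        simp at this
      · rintro ⟨h1, h2⟩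
        exact ⟨fun m hm => agreeK r.val (by omega) h2 m hm, valTrue r.val h1 h2⟩

end SILA
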